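/- Every palindromic automorphism α of A_Γ can be expressed as α = δγ, where δ is a diagram automorphism of A_Γ and γ ∈ ΠPA_Γ is a pure palindromic automorphism. -/

import Mathlib

namespace RaagPal

/-- The commutator relators defining the right-angled Artin group on a graph. -/
def raagRels {V : Type*} (G : SimpleGraph V) : Set (FreeGroup V) :=
  {r | ∃ i j : V, G.Adj i j ∧
    r = FreeGroup.of i * FreeGroup.of j * (FreeGroup.of i)⁻¹ * (FreeGroup.of j)⁻¹}

/-- The right-angled Artin group `A_Γ`. -/
abbrev RAAG {V : Type*} (G : SimpleGraph V) := PresentedGroup (raagRels G)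

/-- The generator of `A_Γ` corresponding to a vertex. -/
def gen {V : Type*} (G : SimpleGraph V) (i : V) : RAAG G := PresentedGroup.of i

/-- The element of `A_Γ` given by a single letter `v^{±1}`. -/
def letter {V : Type*} (G : SimpleGraph V) (p : V × Bool) : RAAG G :=
  if p.2 then gen G p.1 else (gen G p.1)⁻¹

/-- The element of `A_Γ` represented by a word on `V^{±1}`. -/
def wordProd {V : Type*} (G : SimpleGraph V) (L : List (V × Bool)) : RAAG G :=
  (L.map (letter G)).prod

/-- An element of `A_Γ` is a palindrome if it is represented by a word equal to its reverse. -/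
def IsPalindrome {V : Type*} (G : SimpleGraph V) (w : RAAG G) : Prop :=
  ∃ L : List (V × Bool), L.reverse = L ∧ wordProd G L = w

/-- A palindromic automorphism of `A_Γ`. -/
def IsPalAut {V : Type*} (G : SimpleGraph V) (α : MulAut (RAAG G)) : Prop :=
  ∀ i : V, IsPalindrome G (α (gen G i))

/-- A pure palindromic automorphism: each `α(v)` is a palindrome with middle letter `v^{±1}`. -/
def IsPurePalAut {V : Type*} (G : SimpleGraph V) (α : MulAut (RAAG G)) : Prop :=
  ∀ i : V, ∃ (L : List (V × Bool)) (b : Bool),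
    α (gen G i) = wordProd G (L ++ (i, b) :: L.reverse)

/-- `Dom G u v` means `u ≤ v`, i.e. `lk(u) ⊆ st(v)` : `v` dominates `u`. -/
def Dom {V : Type*} (G : SimpleGraph V) (u v : V) : Prop :=
  ∀ k : V, G.Adj k u → k = v ∨ G.Adj k v

/-- A diagram automorphism of `A_Γ`, induced by a graph automorphism of `Γ`. -/
def IsDiagramAut {V : Type*} (G : SimpleGraph V) (α : MulAut (RAAG G)) : Prop :=
  ∃ φ : G ≃g G, ∀ i : V, α (gen G i) = gen G (φ i)

/-- An inversion `ι_j` of `A_Γ`. -/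
def IsInversion {V : Type*} (G : SimpleGraph V) (α : MulAut (RAAG G)) : Prop :=
  ∃ j : V, α (gen G j) = (gen G j)⁻¹ ∧ ∀ k ≠ j, α (gen G k) = gen G k

/-- The dominated elementary palindromic automorphism `P_ij : v_i ↦ v_j v_i v_j`. -/
def IsPij {V : Type*} (G : SimpleGraph V) (i j : V) (α : MulAut (RAAG G)) : Prop :=
  i ≠ j ∧ Dom G i j ∧ α (gen G i) = gen G j * gen G i * gen G j ∧
    ∀ k ≠ i, α (gen G k) = gen G k

/-- A (well-defined) dominated elementary palindromic automorphism. -/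
def IsElemPal {V : Type*} (G : SimpleGraph V) (α : MulAut (RAAG G)) : Prop :=
  ∃ i j : V, IsPij G i j α

/-- An adjacent dominated transvection `τ_ij : v_i ↦ v_i v_j` with `v_i, v_j` adjacent. -/
def IsAdjTransvection {V : Type*} (G : SimpleGraph V) (α : MulAut (RAAG G)) : Prop :=
  ∃ i j : V, i ≠ j ∧ Dom G i j ∧ G.Adj i j ∧ α (gen G i) = gen G i * gen G j ∧
    ∀ k ≠ i, α (gen G k) = gen G k

/-- The exponent-sum homomorphism `A_Γ → ℤ` of the vertex `u`. -/
def expSum {V : Type*} [DecidableEq V] (G : SimpleGraph V) (u : V) :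
    RAAG G →* Multiplicative ℤ :=
  PresentedGroup.toGroup
    (f := fun i => Multiplicative.ofAdd (if i = u then (1 : ℤ) else 0))
    (by
      rintro r ⟨i, j, -, rfl⟩
      simp only [map_mul, map_inv, FreeGroup.lift_apply_of]
      rw [mul_comm (Multiplicative.ofAdd (if i = u then (1:ℤ) else 0))]
      group)

/-- The abelianisation vector of exponent sums of `w ∈ A_Γ`. -/
def abVec {n : ℕ} (G : SimpleGraph (Fin n)) (w : RAAG G) : Fin n → ℤ :=
  fun i => Multiplicative.toAdd (expSum G i w)

/-- The mod 2 abelianisation vector of `w ∈ A_Γ`. -/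
def mod2Vec {n : ℕ} (G : SimpleGraph (Fin n)) (w : RAAG G) : Fin n → ZMod 2 :=
  fun i => (abVec G w i : ZMod 2)

end RaagPal


namespace RaagPal

variable {n : ℕ} {G : SimpleGraph (Fin n)}

/-- Indicator vector of a vertex. -/
def ev (i : Fin n) : Fin n → ZMod 2 := fun u => if i = u then 1 else 0

lemma ev_inj {i j : Fin n} (h : ev i = ev j) : i = j := by
  by_contra hne
  have := congrFun h i
  simp [ev, Ne.symm hne] at this

lemma mod2Vec_mul (w w' : RAAG G) :
    mod2Vec G (w * w') = mod2Vec G w + mod2Vec G w' := by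
  funext u
  simp [mod2Vec, abVec, map_mul, toAdd_mul]

lemma mod2Vec_one : mod2Vec G (1 : RAAG G) = 0 := by
  funext u
  simp [mod2Vec, abVec, map_one]

lemma mod2Vec_inv (w : RAAG G) : mod2Vec G w⁻¹ = mod2Vec G w := by
  funext u
  simp only [mod2Vec, abVec, map_inv, toAdd_inv, Int.cast_neg]
  exact CharTwo.neg_eq _

lemma mod2Vec_gen (i : Fin n) : mod2Vec G (gen G i) = ev i := by
  funext u
  simp only [mod2Vec, abVec, gen, expSum, PresentedGroup.toGroup.of, toAdd_ofAdd, ev]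
  split <;> simp

lemma mod2Vec_letter (p : Fin n × Bool) : mod2Vec G (letter G p) = ev p.1 := by
  rcases p with ⟨v, b⟩
  cases b <;> simp [letter, mod2Vec_inv, mod2Vec_gen]

lemma wordProd_cons (a : Fin n × Bool) (L : List (Fin n × Bool)) :
    wordProd G (a :: L) = letter G a * wordProd G L := by
  simp [wordProd]

lemma mod2Vec_wordProd (L : List (Fin n × Bool)) :
    mod2Vec G (wordProd G L) = (L.map fun p => ev p.1).sum := by
  induction L with
  | nil => simpa [wordProd] using (mod2Vec_one (G := G))
  | cons a L ih =>
    rw [wordProd_cons, mod2Vec_mul, mod2Vec_letter, ih, List.map_cons, List.sum_cons]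

/-- Every palindrome (as a list) is of the form `P ++ P.reverse` or `P ++ x :: P.reverse`. -/
lemma pal_decomp {β : Type*} {L : List β} (h : L.reverse = L) :
    (∃ P : List β, L = P ++ P.reverse) ∨ (∃ (P : List β) (x : β), L = P ++ x :: P.reverse) := by
  have hp := List.Palindrome.of_reverse_eq h
  clear h
  induction hp with
  | nil => exact Or.inl ⟨[], rfl⟩
  | singleton x => exact Or.inr ⟨[], x, rfl⟩
  | cons_concat x _ ih =>
    rcases ih with ⟨P, rfl⟩ | ⟨P, y, rfl⟩
    · exact Or.inl ⟨x :: P, by simp⟩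
    · exact Or.inr ⟨x :: P, y, by simp⟩

lemma mod2Vec_evenPal (P : List (Fin n × Bool)) :
    mod2Vec G (wordProd G (P ++ P.reverse)) = 0 := by
  rw [mod2Vec_wordProd]
  funext u
  simp only [List.map_append, List.map_reverse, List.sum_append, List.sum_reverse,
    Pi.add_apply, Pi.zero_apply]
  exact CharTwo.add_self_eq_zero _

lemma mod2Vec_oddPal (P : List (Fin n × Bool)) (x : Fin n × Bool) :
    mod2Vec G (wordProd G (P ++ x :: P.reverse)) = ev x.1 := by
  rw [mod2Vec_wordProd]
  funext u
  simp only [List.map_append, List.map_cons, List.map_reverse, List.sum_append,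
    List.sum_cons, List.sum_reverse, Pi.add_apply]
  set s := ((P.map fun p => ev p.1).sum) u
  set e := ev x.1 u
  show s + (e + s) = e
  rw [add_comm e s, ← add_assoc, CharTwo.add_self_eq_zero, zero_add]

/-- Mod 2 abelianisation is "linear" with respect to any endomorphism. -/
lemma mod2Vec_endo (F : RAAG G →* RAAG G) (w : RAAG G) :
    mod2Vec G (F w) = ∑ k, mod2Vec G w k • mod2Vec G (F (gen G k)) := by
  have hw : w ∈ Subgroup.closure (Set.range (PresentedGroup.of : Fin n → RAAG G)) := by
    rw [PresentedGroup.closure_range_of]; trivial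
  induction hw using Subgroup.closure_induction with
  | mem x hx =>
    obtain ⟨k0, rfl⟩ := hx
    show mod2Vec G (F (gen G k0)) = ∑ k, mod2Vec G (gen G k0) k • mod2Vec G (F (gen G k))
    have hterm : ∀ k, (mod2Vec G (gen G k0)) k • mod2Vec G (F (gen G k))
        = if k0 = k then mod2Vec G (F (gen G k)) else 0 := by
      intro k
      rw [mod2Vec_gen]
      simp only [ev]
      split <;> simp
    rw [Finset.sum_congr rfl fun k _ => hterm k, Finset.sum_ite_eq]
    simp
  | one =>
    simp [map_one, mod2Vec_one]
  | mul x y _ _ ihx ihy =>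
    rw [map_mul, mod2Vec_mul, ihx, ihy, ← Finset.sum_add_distrib]
    refine Finset.sum_congr rfl fun k _ => ?_
    rw [mod2Vec_mul]
    show _ = (mod2Vec G x k + mod2Vec G y k) • _
    rw [add_smul]
  | inv x _ ih =>
    rw [map_inv, mod2Vec_inv, ih]
    refine Finset.sum_congr rfl fun k _ => ?_
    rw [mod2Vec_inv]

/-- Commutation of generators joined by an edge. -/
lemma gen_comm {i j : Fin n} (h : G.Adj i j) :
    gen G i * gen G j = gen G j * gen G i := by
  have hr : (FreeGroup.of i * FreeGroup.of j * (FreeGroup.of i)⁻¹ * (FreeGroup.of j)⁻¹)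
      ∈ raagRels G := ⟨i, j, h, rfl⟩
  have h1 : PresentedGroup.mk (raagRels G)
      (FreeGroup.of i * FreeGroup.of j * (FreeGroup.of i)⁻¹ * (FreeGroup.of j)⁻¹) = 1 :=
    (QuotientGroup.eq_one_iff _).mpr (Subgroup.subset_normalClosure hr)
  have h2 : gen G i * gen G j * (gen G i)⁻¹ * (gen G j)⁻¹ = 1 := by
    have h1' := h1; simp only [map_mul, map_inv] at h1'; exact h1'
  rw [mul_inv_eq_one] at h2
  rw [mul_inv_eq_iff_eq_mul] at h2
  exact h2

/-- Coordinate of the mod 2 abelianisation, as a monoid hom. -/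
def coordHom (G : SimpleGraph (Fin n)) (u : Fin n) : RAAG G →* Multiplicative (ZMod 2) where
  toFun w := Multiplicative.ofAdd (mod2Vec G w u)
  map_one' := by
    show Multiplicative.ofAdd (mod2Vec G 1 u) = 1
    rw [mod2Vec_one]; rfl
  map_mul' x y := by
    show Multiplicative.ofAdd (mod2Vec G (x * y) u) = _
    rw [mod2Vec_mul]; rfl

@[simp] lemma coordHom_apply (G : SimpleGraph (Fin n)) (u : Fin n) (w : RAAG G) :
    coordHom G u w = Multiplicative.ofAdd (mod2Vec G w u) := rfl

/-- The Heisenberg group over `ZMod 2`. -/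
structure Heis where
  a : ZMod 2
  b : ZMod 2
  c : ZMod 2
deriving DecidableEq, Fintype

namespace Heis

instance : Mul Heis := ⟨fun x y => ⟨x.a + y.a, x.b + y.b, x.c + y.c + x.a * y.b⟩⟩
instance : One Heis := ⟨⟨0, 0, 0⟩⟩
instance : Inv Heis := ⟨fun x => ⟨x.a, x.b, x.c + x.a * x.b⟩⟩

instance : Group Heis where
  mul_assoc := by decide
  one_mul := by decide
  mul_one := by decide
  inv_mul_cancel := by decide

lemma mul_def (x y : Heis) :
    x * y = ⟨x.a + y.a, x.b + y.b, x.c + y.c + x.a * y.b⟩ := rfl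

lemma commutator_eq_one {a b a' b' : ZMod 2} (h : a * b' + a' * b = 0) :
    (Heis.mk a b 0) * (Heis.mk a' b' 0) * (Heis.mk a b 0)⁻¹ * (Heis.mk a' b' 0)⁻¹ = 1 := by
  revert h
  revert a b a' b'
  decide

/-- The first coordinate is a hom to `ZMod 2`. -/
def projA : Heis →* Multiplicative (ZMod 2) where
  toFun x := Multiplicative.ofAdd x.a
  map_one' := rfl
  map_mul' _ _ := rfl

/-- The second coordinate is a hom to `ZMod 2`. -/
def projB : Heis →* Multiplicative (ZMod 2) where
  toFun x := Multiplicative.ofAdd x.b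
  map_one' := rfl
  map_mul' _ _ := rfl

end Heis

/-- The endomorphism of `A_Γ` induced by a graph automorphism. -/
def diagHom (φ : G ≃g G) : RAAG G →* RAAG G :=
  PresentedGroup.toGroup (f := fun k => gen G (φ k)) (by
    rintro r ⟨k, l, hkl, rfl⟩
    simp only [map_mul, map_inv, FreeGroup.lift_apply_of]
    rw [gen_comm (φ.map_rel_iff.mpr hkl)]
    group)

@[simp] lemma diagHom_of (φ : G ≃g G) (k : Fin n) :
    diagHom φ (PresentedGroup.of k) = gen G (φ k) :=
  PresentedGroup.toGroup.of _

@[simp] lemma diagHom_gen (φ : G ≃g G) (k : Fin n) :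
    diagHom φ (gen G k) = gen G (φ k) :=
  PresentedGroup.toGroup.of _

lemma diagHom_symm_comp (φ : G ≃g G) (w : RAAG G) :
    diagHom φ.symm (diagHom φ w) = w := by
  have h : (diagHom φ.symm).comp (diagHom φ) = MonoidHom.id (RAAG G) := by
    ext x
    simp only [MonoidHom.comp_apply, diagHom_of, diagHom_gen, MonoidHom.id_apply]
    show gen G (φ.symm (φ x)) = PresentedGroup.of x
    rw [RelIso.symm_apply_apply]
    rfl
  exact DFunLike.congr_fun h w

/-- The diagram automorphism of `A_Γ` induced by a graph automorphism. -/
def diagAut (φ : G ≃g G) : MulAut (RAAG G) :=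
  { toFun := diagHom φ
    invFun := diagHom φ.symm
    left_inv := diagHom_symm_comp φ
    right_inv := fun w => by
      have h := diagHom_symm_comp φ.symm w
      rwa [show φ.symm.symm = φ from rfl] at h
    map_mul' := map_mul _ }

@[simp] lemma diagAut_apply (φ : G ≃g G) (w : RAAG G) : diagAut φ w = diagHom φ w := rfl

lemma diagHom_letter (φ : G ≃g G) (p : Fin n × Bool) :
    diagHom φ (letter G p) = letter G (φ p.1, p.2) := by
  rcases p with ⟨v, b⟩
  cases b <;> simp [letter]

lemma diagHom_wordProd (φ : G ≃g G) (L : List (Fin n × Bool)) :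
    diagHom φ (wordProd G L) = wordProd G (L.map fun p => (φ p.1, p.2)) := by
  induction L with
  | nil => simp [wordProd]
  | cons a L ih =>
    rw [wordProd_cons, map_mul, diagHom_letter, ih, List.map_cons, wordProd_cons]

end RaagPal

open RaagPal in
/-- every palindromic automorphism `α` of `A_Γ` factors as `α = δ γ` with
`δ` a diagram automorphism and `γ` a pure palindromic automorphism. -/
theorem palAut_eq_diagram_mul_pure (n : ℕ) (G : SimpleGraph (Fin n))
    (α : MulAut (RAAG G)) (hα : IsPalAut G α) :
    ∃ δ γ : MulAut (RAAG G), IsDiagramAut G δ ∧ IsPurePalAut G γ ∧ α = δ * γ := by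
  classical
  have hlin : ∀ w : RAAG G, mod2Vec G (α.symm w)
      = ∑ k, mod2Vec G w k • mod2Vec G (α.symm (gen G k)) := fun w =>
    mod2Vec_endo (α.symm.toMonoidHom) w
  -- each α(gen i) is an odd palindrome
  have key : ∀ i : Fin n, ∃ (P : List (Fin n × Bool)) (x : Fin n × Bool),
      α (gen G i) = wordProd G (P ++ x :: P.reverse) := by
    intro i
    obtain ⟨L, hrev, hL⟩ := hα i
    rcases pal_decomp hrev with ⟨P, rfl⟩ | ⟨P, x, rfl⟩
    · exfalso
      have h0 : mod2Vec G (α (gen G i)) = 0 := by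
        rw [← hL]; exact mod2Vec_evenPal P
      have h1 := hlin (α (gen G i))
      rw [h0] at h1
      simp only [MulEquiv.symm_apply_apply, mod2Vec_gen, Pi.zero_apply, zero_smul,
        Finset.sum_const_zero] at h1
      have h2 := congrFun h1 i
      simp [ev] at h2
    · exact ⟨P, x, hL.symm⟩
  choose P X hPX using key
  set σ : Fin n → Fin n := fun i => (X i).1 with hσ
  have hmid : ∀ i, mod2Vec G (α (gen G i)) = ev (σ i) := by
    intro i
    rw [hPX i, hσ]
    exact mod2Vec_oddPal _ _
  have hinj : Function.Injective σ := by
    intro i j hij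
    have h1 := hlin (α (gen G i))
    have h2 := hlin (α (gen G j))
    rw [hmid i, hij] at h1
    rw [hmid j] at h2
    simp only [MulEquiv.symm_apply_apply, mod2Vec_gen] at h1 h2
    exact ev_inj (h1.trans h2.symm)
  have hbij : Function.Bijective σ := Finite.injective_iff_bijective.mp hinj
  have hcomm : ∀ {i j : Fin n}, G.Adj i j →
      α (gen G i) * α (gen G j) = α (gen G j) * α (gen G i) := by
    intro i j h
    rw [← map_mul, ← map_mul, gen_comm h]
  -- σ preserves adjacency (Heisenberg argument)
  have hadj : ∀ i j : Fin n, G.Adj i j → G.Adj (σ i) (σ j) := by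
    intro i j hij
    by_contra hns
    have hσij : σ i ≠ σ j := fun h => hij.ne (hinj h)
    set A : Fin n → ZMod 2 := fun k => if k = σ i then 1 else 0 with hA
    set B : Fin n → ZMod 2 := fun k => if k = σ j then 1 else 0 with hB
    have hrel : ∀ r ∈ raagRels G,
        FreeGroup.lift (fun k => Heis.mk (A k) (B k) 0) r = 1 := by
      rintro r ⟨k, l, hkl, rfl⟩
      simp only [map_mul, map_inv, FreeGroup.lift_apply_of]
      apply Heis.commutator_eq_one
      have h1 : A k * B l = 0 := by
        by_contra hne
        have hk : k = σ i := by by_contra h'; simp [hA, h'] at hne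
        have hl : l = σ j := by by_contra h'; simp [hB, h'] at hne
        exact hns (hk ▸ hl ▸ hkl)
      have h2 : A l * B k = 0 := by
        by_contra hne
        have hk : l = σ i := by by_contra h'; simp [hA, h'] at hne
        have hl : k = σ j := by by_contra h'; simp [hB, h'] at hne
        exact hns (hk ▸ hl ▸ hkl.symm)
      rw [h1, h2, add_zero]
    set fH : RAAG G →* Heis := PresentedGroup.toGroup hrel with hfH
    have hcompA : ∀ w : RAAG G, (fH w).a = mod2Vec G w (σ i) := by
      intro w
      have hhoms : Heis.projA.comp fH = coordHom G (σ i) := by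
        refine PresentedGroup.ext fun k => ?_
        show Multiplicative.ofAdd (fH (PresentedGroup.of k)).a
            = Multiplicative.ofAdd (mod2Vec G (PresentedGroup.of k) (σ i))
        rw [hfH, PresentedGroup.toGroup.of]
        have hg : mod2Vec G (PresentedGroup.of (rels := raagRels G) k) (σ i) = ev k (σ i) :=
          congrFun (mod2Vec_gen k) (σ i)
        rw [hg]
        simp [hA, ev]
      have := DFunLike.congr_fun hhoms w
      simpa [Heis.projA, coordHom] using this
    have hcompB : ∀ w : RAAG G, (fH w).b = mod2Vec G w (σ j) := by
      intro w
      have hhoms : Heis.projB.comp fH = coordHom G (σ j) := by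
        refine PresentedGroup.ext fun k => ?_
        show Multiplicative.ofAdd (fH (PresentedGroup.of k)).b
            = Multiplicative.ofAdd (mod2Vec G (PresentedGroup.of k) (σ j))
        rw [hfH, PresentedGroup.toGroup.of]
        have hg : mod2Vec G (PresentedGroup.of (rels := raagRels G) k) (σ j) = ev k (σ j) :=
          congrFun (mod2Vec_gen k) (σ j)
        rw [hg]
        simp [hB, ev]
      have := DFunLike.congr_fun hhoms w
      simpa [Heis.projB, coordHom] using this
    have hXa : (fH (α (gen G i))).a = 1 := by
      rw [hcompA, hmid i]; simp [ev]
    have hXb : (fH (α (gen G i))).b = 0 := by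
      rw [hcompB, hmid i]; simp [ev, hσij]
    have hYa : (fH (α (gen G j))).a = 0 := by
      rw [hcompA, hmid j]; simp [ev, Ne.symm hσij]
    have hYb : (fH (α (gen G j))).b = 1 := by
      rw [hcompB, hmid j]; simp [ev]
    have hcm := congrArg fH (hcomm hij)
    rw [map_mul, map_mul] at hcm
    have hc := congrArg Heis.c hcm
    simp only [Heis.mul_def, hXa, hXb, hYa, hYb, mul_one, mul_zero, zero_mul, one_mul,
      add_zero] at hc
    have h3 : (1 : ZMod 2) = 0 := by linear_combination hc
    exact one_ne_zero h3
  -- σ reflects adjacency (finiteness)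
  have hadj' : ∀ i j : Fin n, G.Adj (σ i) (σ j) → G.Adj i j := by
    intro i j h
    set Fm : {p : Fin n × Fin n // G.Adj p.1 p.2} → {p : Fin n × Fin n // G.Adj p.1 p.2} :=
      fun p => ⟨(σ p.1.1, σ p.1.2), hadj _ _ p.2⟩ with hFm
    have hFinj : Function.Injective Fm := by
      rintro ⟨⟨a, b⟩, hab⟩ ⟨⟨c, d⟩, hcd⟩ hpq
      simp only [hFm, Subtype.mk.injEq, Prod.mk.injEq] at hpq
      simp [hinj hpq.1, hinj hpq.2]
    obtain ⟨⟨⟨a, b⟩, hab⟩, heq⟩ := (Finite.injective_iff_surjective.mp hFinj) ⟨(σ i, σ j), h⟩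
    simp only [hFm, Subtype.mk.injEq, Prod.mk.injEq] at heq
    rwa [hinj heq.1, hinj heq.2] at hab
  set e : Fin n ≃ Fin n := Equiv.ofBijective σ hbij with he
  have hφrel : ∀ {a b : Fin n}, G.Adj (e a) (e b) ↔ G.Adj a b :=
    fun {a b} => ⟨hadj' a b, hadj a b⟩
  set φ : G ≃g G := ⟨e, hφrel⟩ with hφ
  refine ⟨diagAut φ, (diagAut φ)⁻¹ * α, ⟨φ, fun i => diagHom_gen φ i⟩, ?_, ?_⟩
  · intro i
    refine ⟨(P i).map (fun p => (φ.symm p.1, p.2)), (X i).2, ?_⟩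
    have h1 : ((diagAut φ)⁻¹ * α) (gen G i) = diagHom φ.symm (α (gen G i)) := rfl
    rw [h1, hPX i, diagHom_wordProd, List.map_append, List.map_cons, List.map_reverse]
    have h2 : φ.symm ((X i).1) = i := e.symm_apply_apply i
    rw [h2]
  · exact (mul_inv_cancel_left _ _).symm
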